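/- Sum-of-squares decomposition of the N-party Bell operator: Let N ≥ 2, let A_{1,0}, A_{1,1} be Hermitian matrices on ℂ^{d₁} and A_{n,0}, A_{n,1} Hermitian matrices on ℂ^{d_n} (n = 2,…,N), all with squares ⪯ identity. For a ∈ {0,1}^N define P_{a₁} = (−1)^{a₁} Ã_{1,1} ⊗ I − I ⊗ A_{2,1} ⊗ ⋯ ⊗ A_{N,1} and, for n = 2,…,N, Q_{a,n} = (−1)^{a₁+a_n} Ã_{1,0} ⊗ I − A_{n,0}^{(n)} ⊗ I₁ (i.e. A_{n,0} on factor n and identity elsewhere). Then (N−1) P_{a₁}² + Σ_{n=2}^{N} Q_{a,n}² ⪯ 2 [ 2(N−1)·I − B̂_a ] in the positive semidefinite order. -/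

import Mathlib

/-! Sum-of-squares decomposition of the N-party Bell operator. -/

open Matrix Finset
open scoped Matrix Kronecker ComplexOrder

noncomputable section

def PauliX : Matrix (Fin 2) (Fin 2) ℂ := !![0, 1; 1, 0]

def PauliZ : Matrix (Fin 2) (Fin 2) ℂ := !![1, 0; 0, -1]

/-- `tildeA A 0 = (A₀ - A₁)/√2` and `tildeA A 1 = (A₀ + A₁)/√2`. -/
def tildeA {n : Type*} (A : Fin 2 → Matrix n n ℂ) (j : Fin 2) : Matrix n n ℂ :=
  (Real.sqrt 2 : ℂ)⁻¹ • (A 0 + (-1 : ℂ) ^ ((j : ℕ) + 1) • A 1)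

/-- Kronecker product of a family of matrices, on index `Π n, p n`. -/
def famKron {N : ℕ} {p q : Fin N → Type*} (M : ∀ n, Matrix (p n) (q n) ℂ) :
    Matrix (∀ n, p n) (∀ n, q n) ℂ :=
  Matrix.of fun s t => ∏ n, M n (s n) (t n)

/-- The N-party Bell operator
`B̂_a = (−1)^{a₁} [ (N−1) Ã_{1,1} ⊗ A_{2,1} ⊗ ⋯ ⊗ A_{N,1}
        + Σ_{n=2}^N (−1)^{a_n} Ã_{1,0} ⊗ A_{n,0}^{(n)} ]`,
where party `n` of the paper corresponds to index `n−1 : Fin N`. -/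
def NBell {N : ℕ} [NeZero N] {d : Fin N → ℕ}
    (A : ∀ n, Fin 2 → Matrix (Fin (d n)) (Fin (d n)) ℂ) (a : Fin N → Fin 2) :
    Matrix (∀ n, Fin (d n)) (∀ n, Fin (d n)) ℂ :=
  (-1 : ℂ) ^ (a 0 : ℕ) •
    (((N : ℂ) - 1) • famKron (Function.update (fun n => A n 1) 0 (tildeA (A 0) 1)) +
      ∑ n ∈ Finset.univ.erase 0, (-1 : ℂ) ^ (a n : ℕ) •
        famKron (Function.update
          (Function.update (fun m => (1 : Matrix (Fin (d m)) (Fin (d m)) ℂ))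
            0 (tildeA (A 0) 0)) n (A n 0)))

/-- The GHZ-like state `|φ_a⟩ = (|a₁ … a_N⟩ + (−1)^{a₁} |1−a₁ … 1−a_N⟩)/√2`. -/
def ghz {N : ℕ} [NeZero N] (a : Fin N → Fin 2) : (Fin N → Fin 2) → ℂ := fun s =>
  (Real.sqrt 2 : ℂ)⁻¹ *
    ((if s = a then 1 else 0) +
      (-1 : ℂ) ^ (a 0 : ℕ) * (if s = (fun n => a n + 1) then 1 else 0))

/-- `P_{a₁} = (−1)^{a₁} Ã_{1,1} ⊗ I − I ⊗ A_{2,1} ⊗ ⋯ ⊗ A_{N,1}`. -/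
def SOSP {N : ℕ} [NeZero N] {d : Fin N → ℕ}
    (A : ∀ n, Fin 2 → Matrix (Fin (d n)) (Fin (d n)) ℂ) (a : Fin N → Fin 2) :
    Matrix (∀ n, Fin (d n)) (∀ n, Fin (d n)) ℂ :=
  (-1 : ℂ) ^ (a 0 : ℕ) •
      famKron (Function.update (fun m => (1 : Matrix (Fin (d m)) (Fin (d m)) ℂ))
        0 (tildeA (A 0) 1)) -
    famKron (Function.update (fun n => A n 1) 0 (1 : Matrix (Fin (d 0)) (Fin (d 0)) ℂ))

/-- `Q_{a,n} = (−1)^{a₁+a_n} Ã_{1,0} ⊗ I − A_{n,0}^{(n)}`. -/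
def SOSQ {N : ℕ} [NeZero N] {d : Fin N → ℕ}
    (A : ∀ n, Fin 2 → Matrix (Fin (d n)) (Fin (d n)) ℂ) (a : Fin N → Fin 2) (n : Fin N) :
    Matrix (∀ n, Fin (d n)) (∀ n, Fin (d n)) ℂ :=
  (-1 : ℂ) ^ ((a 0 : ℕ) + (a n : ℕ)) •
      famKron (Function.update (fun m => (1 : Matrix (Fin (d m)) (Fin (d m)) ℂ))
        0 (tildeA (A 0) 0)) -
    famKron (Function.update (fun m => (1 : Matrix (Fin (d m)) (Fin (d m)) ℂ)) n (A n 0))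

section Helpers

set_option linter.unusedSectionVars false

variable {N : ℕ} {p : Fin N → Type*} [∀ n, Fintype (p n)] [∀ n, DecidableEq (p n)]

lemma famKron_mul (M M' : ∀ n, Matrix (p n) (p n) ℂ) :
    famKron M * famKron M' = famKron fun n => M n * M' n := by
  ext s t
  simp only [famKron, mul_apply, of_apply, ← Finset.prod_mul_distrib]
  exact (Fintype.prod_sum fun n u => M n (s n) u * M' n u (t n)).symm

lemma famKron_one : famKron (fun n => (1 : Matrix (p n) (p n) ℂ)) = 1 := by
  ext s t
  simp only [famKron, of_apply, one_apply]
  by_cases h : s = t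
  · subst h; simp
  · rw [if_neg h]
    obtain ⟨n, hn⟩ := Function.ne_iff.mp h
    exact Finset.prod_eq_zero (mem_univ n) (by simp [one_apply, hn])

lemma famKron_conjTranspose (M : ∀ n, Matrix (p n) (p n) ℂ) :
    (famKron M)ᴴ = famKron fun n => (M n)ᴴ := by
  ext s t
  simp only [famKron, conjTranspose_apply, of_apply, star_prod]

open scoped MatrixOrder in
lemma famKron_posSemidef {M : ∀ n, Matrix (p n) (p n) ℂ} (hM : ∀ n, (M n).PosSemidef) :
    (famKron M).PosSemidef := by
  have h : famKron M = (famKron fun n => CFC.sqrt (M n))ᴴ * (famKron fun n => CFC.sqrt (M n)) := by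
    rw [famKron_conjTranspose, famKron_mul]
    refine congrArg famKron (funext fun n => ?_)
    rw [(CFC.sqrt_nonneg (M n)).posSemidef.isHermitian.eq, CFC.sqrt_mul_sqrt_self (M n) (hM n).nonneg]
  rw [h]
  exact posSemidef_conjTranspose_mul_self _

lemma famKron_update_apply (M : ∀ n, Matrix (p n) (p n) ℂ) (k : Fin N)
    (X : Matrix (p k) (p k) ℂ) (s t : ∀ n, p n) :
    famKron (Function.update M k X) s t =
      X (s k) (t k) * ∏ n ∈ univ.erase k, M n (s n) (t n) := by
  simp only [famKron, of_apply]
  rw [← Finset.mul_prod_erase univ _ (mem_univ k), Function.update_self]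
  congr 1
  exact Finset.prod_congr rfl fun n hn => by
    rw [Function.update_of_ne (Finset.ne_of_mem_erase hn)]

lemma famKron_update_sub (M : ∀ n, Matrix (p n) (p n) ℂ) (k : Fin N)
    (X Y : Matrix (p k) (p k) ℂ) :
    famKron (Function.update M k (X - Y)) =
      famKron (Function.update M k X) - famKron (Function.update M k Y) := by
  ext s t
  simp [famKron_update_apply, Matrix.sub_apply, sub_mul]

lemma famKron_update_smul (M : ∀ n, Matrix (p n) (p n) ℂ) (k : Fin N)
    (c : ℂ) (X : Matrix (p k) (p k) ℂ) :
    famKron (Function.update M k (c • X)) = c • famKron (Function.update M k X) := by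
  ext s t
  simp [famKron_update_apply, Matrix.smul_apply, smul_mul_assoc, mul_assoc]

lemma famKron_update_one_mul (k : Fin N) (X Y : Matrix (p k) (p k) ℂ) :
    famKron (Function.update (fun m => (1 : Matrix (p m) (p m) ℂ)) k X) *
      famKron (Function.update (fun m => (1 : Matrix (p m) (p m) ℂ)) k Y) =
      famKron (Function.update (fun m => (1 : Matrix (p m) (p m) ℂ)) k (X * Y)) := by
  rw [famKron_mul]
  refine congrArg famKron (funext fun n => ?_)
  rcases eq_or_ne n k with rfl | hn
  · simp
  · simp [Function.update_of_ne hn]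

lemma famKron_le_one {M : ∀ n, Matrix (p n) (p n) ℂ} (h0 : ∀ n, (M n).PosSemidef)
    (h1 : ∀ n, ((1 : Matrix (p n) (p n) ℂ) - M n).PosSemidef) :
    ((1 : Matrix (∀ n, p n) (∀ n, p n) ℂ) - famKron M).PosSemidef := by
  have key : ∀ s : Finset (Fin N),
      ((1 : Matrix (∀ n, p n) (∀ n, p n) ℂ) -
        famKron (fun n => if n ∈ s then M n else 1)).PosSemidef := by
    intro s
    induction s using Finset.induction with
    | empty =>
      simpa [famKron_one] using (Matrix.PosSemidef.zero (n := ∀ n, p n) (R := ℂ))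
    | @insert k s hk ih =>
      have hupd : (fun n => if n ∈ insert k s then M n else 1) =
          Function.update (fun n => if n ∈ s then M n else 1) k (M k) := by
        funext n
        rcases eq_or_ne n k with rfl | hn
        · simp [hk]
        · simp [Function.update_of_ne hn, Finset.mem_insert, hn]
      have hfk : Function.update (fun n => if n ∈ s then M n else 1) k
          (1 : Matrix (p k) (p k) ℂ) = fun n => if n ∈ s then M n else 1 := by
        funext n
        rcases eq_or_ne n k with rfl | hn
        · simp [hk]
        · simp [Function.update_of_ne hn]
      have hdiff : (famKron (fun n => if n ∈ s then M n else 1) -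
          famKron (Function.update (fun n => if n ∈ s then M n else 1) k (M k))).PosSemidef := by
        nth_rewrite 1 [← hfk]
        rw [← famKron_update_sub]
        refine famKron_posSemidef fun n => ?_
        rcases eq_or_ne n k with rfl | hn
        · simpa using h1 n
        · rw [Function.update_of_ne hn]
          split
          · exact h0 n
          · exact Matrix.PosSemidef.one
      have := ih.add hdiff
      rw [hupd]
      convert this using 1
      abel
  have := key univ
  simpa using this

end Helpers

lemma neg_one_pow_mul_self (k : ℕ) : ((-1 : ℂ) ^ k) * ((-1 : ℂ) ^ k) = 1 := by
  rw [← pow_add, ← two_mul, pow_mul, neg_one_sq, one_pow]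

lemma sq_smul_sub {m : Type*} [Fintype m] [DecidableEq m] {X Y : Matrix m m ℂ} (ε : ℂ)
    (hε : ε * ε = 1) (hcomm : X * Y = Y * X) :
    (ε • X - Y) ^ 2 = X ^ 2 + Y ^ 2 - (2 * ε) • (X * Y) := by
  rw [pow_two, sub_mul, mul_sub, mul_sub]
  simp only [smul_mul_assoc, mul_smul_comm, smul_smul, hε, one_smul]
  rw [← hcomm, pow_two, pow_two, two_mul, add_smul]
  abel

lemma tilde_sq_add {m : Type*} [Fintype m] [DecidableEq m] (A : Fin 2 → Matrix m m ℂ) :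
    tildeA A 0 ^ 2 + tildeA A 1 ^ 2 = A 0 ^ 2 + A 1 ^ 2 := by
  have h0 : tildeA A 0 = (Real.sqrt 2 : ℂ)⁻¹ • (A 0 - A 1) := by
    simp [tildeA, sub_eq_add_neg]
  have h1 : tildeA A 1 = (Real.sqrt 2 : ℂ)⁻¹ • (A 0 + A 1) := by
    simp [tildeA]
  have key : (A 0 - A 1) ^ 2 + (A 0 + A 1) ^ 2 = (2 : ℂ) • (A 0 ^ 2 + A 1 ^ 2) := by
    rw [two_smul]
    noncomm_ring
  have hr : ((Real.sqrt 2 : ℂ)⁻¹) ^ 2 * 2 = 1 := by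
    rw [pow_two, ← mul_inv]
    norm_cast
    rw [Real.mul_self_sqrt (by norm_num)]
    norm_num
  rw [h0, h1, smul_pow, smul_pow, ← smul_add, key, smul_smul, hr, one_smul]

lemma psd_smul_nat {m : Type*} [Fintype m] {X : Matrix m m ℂ} (hX : X.PosSemidef) (k : ℕ) :
    (((k : ℂ)) • X).PosSemidef := by
  rw [Nat.cast_smul_eq_nsmul]
  induction k with
  | zero => simpa using Matrix.PosSemidef.zero
  | succ k ih => rw [succ_nsmul]; exact ih.add hX

lemma psd_sq {m : Type*} [Fintype m] [DecidableEq m] {X : Matrix m m ℂ} (hX : X.IsHermitian) :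
    (X ^ 2).PosSemidef := by
  have h : Xᴴ * X = X * X := by rw [hX.eq]
  rw [pow_two, ← h]
  exact posSemidef_conjTranspose_mul_self X

lemma core_identity {m ι : Type*} [Fintype m] [DecidableEq m] (s : Finset ι) (ν : ℂ)
    (hν : (s.card : ℂ) = ν) (ε0 : ℂ) (hε0 : ε0 * ε0 = 1) (εf : ι → ℂ)
    (hεf : ∀ n ∈ s, (ε0 * εf n) * (ε0 * εf n) = 1)
    (K0 K1 T : Matrix m m ℂ) (R : ι → Matrix m m ℂ)
    (hK1T : K1 * T = T * K1) (hK0R : ∀ n ∈ s, K0 * R n = R n * K0) :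
    (2 : ℂ) • ((2 * ν) • (1 : Matrix m m ℂ)
        - ε0 • (ν • (K1 * T) + ∑ n ∈ s, εf n • (K0 * R n)))
      - (ν • (ε0 • K1 - T) ^ 2 + ∑ n ∈ s, ((ε0 * εf n) • K0 - R n) ^ 2)
    = ν • ((2 : ℂ) • (1 : Matrix m m ℂ) - K0 ^ 2 - K1 ^ 2) + ν • (1 - T ^ 2)
      + ∑ n ∈ s, ((1 : Matrix m m ℂ) - R n ^ 2) := by
  rw [sq_smul_sub ε0 hε0 hK1T]
  rw [Finset.sum_congr rfl (fun n hn => sq_smul_sub (ε0 * εf n) (hεf n hn) (hK0R n hn))]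
  have hsplit : ∑ n ∈ s, (K0 ^ 2 + R n ^ 2 - (2 * (ε0 * εf n)) • (K0 * R n))
      = ν • K0 ^ 2 + ∑ n ∈ s, R n ^ 2
        - (2 * ε0) • ∑ n ∈ s, εf n • (K0 * R n) := by
    rw [Finset.sum_sub_distrib, Finset.sum_add_distrib, Finset.sum_const, Finset.smul_sum,
      ← hν, ← Nat.cast_smul_eq_nsmul ℂ]
    congr 1
    refine Finset.sum_congr rfl fun n hn => ?_
    rw [smul_smul, mul_assoc]
  rw [hsplit]
  have hsplit2 : ∑ n ∈ s, ((1 : Matrix m m ℂ) - R n ^ 2)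
      = ν • (1 : Matrix m m ℂ) - ∑ n ∈ s, R n ^ 2 := by
    rw [Finset.sum_sub_distrib, Finset.sum_const, ← hν, ← Nat.cast_smul_eq_nsmul ℂ]
  rw [hsplit2]
  generalize (∑ n ∈ s, εf n • (K0 * R n)) = W
  generalize (∑ n ∈ s, R n ^ 2) = r
  module

theorem sos_decomposition_N_party (N : ℕ) [NeZero N] (hN : 2 ≤ N) (d : Fin N → ℕ)
    (A : ∀ n, Fin 2 → Matrix (Fin (d n)) (Fin (d n)) ℂ)
    (hAh : ∀ n x, (A n x).IsHermitian)
    (hAc : ∀ n x, ((1 : Matrix (Fin (d n)) (Fin (d n)) ℂ) - A n x ^ 2).PosSemidef)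
    (a : Fin N → Fin 2) :
    ((2 : ℂ) • ((2 * ((N : ℂ) - 1)) • (1 : Matrix (∀ n, Fin (d n)) (∀ n, Fin (d n)) ℂ)
          - NBell A a)
      - (((N : ℂ) - 1) • SOSP A a ^ 2
          + ∑ n ∈ Finset.univ.erase 0, SOSQ A a n ^ 2)).PosSemidef := by
  have hone : 1 ≤ N := by omega
  have hν : (((Finset.univ.erase (0 : Fin N)).card : ℕ) : ℂ) = (N : ℂ) - 1 := by
    rw [Finset.card_erase_of_mem (Finset.mem_univ _), Finset.card_univ, Fintype.card_fin,
      Nat.cast_sub hone, Nat.cast_one]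
  have hνnat : (N : ℂ) - 1 = ((N - 1 : ℕ) : ℂ) := by
    rw [Nat.cast_sub hone, Nat.cast_one]
  have hK1T : famKron (Function.update (fun m => (1 : Matrix (Fin (d m)) (Fin (d m)) ℂ)) 0
          (tildeA (A 0) 1)) *
        famKron (Function.update (fun n => A n 1) 0 (1 : Matrix (Fin (d 0)) (Fin (d 0)) ℂ)) =
      famKron (Function.update (fun n => A n 1) 0 (tildeA (A 0) 1)) := by
    rw [famKron_mul]
    refine congrArg famKron (funext fun n => ?_)
    rcases eq_or_ne n 0 with rfl | hn
    · simp
    · simp [Function.update_of_ne hn]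
  have hcommT : famKron (Function.update (fun m => (1 : Matrix (Fin (d m)) (Fin (d m)) ℂ)) 0
          (tildeA (A 0) 1)) *
        famKron (Function.update (fun n => A n 1) 0 (1 : Matrix (Fin (d 0)) (Fin (d 0)) ℂ)) =
      famKron (Function.update (fun n => A n 1) 0 (1 : Matrix (Fin (d 0)) (Fin (d 0)) ℂ)) *
        famKron (Function.update (fun m => (1 : Matrix (Fin (d m)) (Fin (d m)) ℂ)) 0
          (tildeA (A 0) 1)) := by
    rw [famKron_mul, famKron_mul]
    refine congrArg famKron (funext fun n => ?_)
    rcases eq_or_ne n 0 with rfl | hn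
    · simp
    · simp [Function.update_of_ne hn]
  have hK0R : ∀ n ∈ Finset.univ.erase (0 : Fin N),
      famKron (Function.update
          (Function.update (fun m => (1 : Matrix (Fin (d m)) (Fin (d m)) ℂ)) 0
            (tildeA (A 0) 0)) n (A n 0)) =
      famKron (Function.update (fun m => (1 : Matrix (Fin (d m)) (Fin (d m)) ℂ)) 0
          (tildeA (A 0) 0)) *
        famKron (Function.update (fun m => (1 : Matrix (Fin (d m)) (Fin (d m)) ℂ)) n (A n 0)) := by
    intro n hn
    have hn0 : n ≠ 0 := Finset.ne_of_mem_erase hn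
    rw [famKron_mul]
    refine congrArg famKron (funext fun m => ?_)
    rcases eq_or_ne m 0 with rfl | hm0
    · simp [Function.update_self, Function.update_of_ne (Ne.symm hn0)]
    · rcases eq_or_ne m n with rfl | hmn
      · simp [Function.update_self, Function.update_of_ne hm0]
      · simp [Function.update_of_ne hm0, Function.update_of_ne hmn]
  have hcommR : ∀ n ∈ Finset.univ.erase (0 : Fin N),
      famKron (Function.update (fun m => (1 : Matrix (Fin (d m)) (Fin (d m)) ℂ)) 0
          (tildeA (A 0) 0)) *
        famKron (Function.update (fun m => (1 : Matrix (Fin (d m)) (Fin (d m)) ℂ)) n (A n 0)) =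
      famKron (Function.update (fun m => (1 : Matrix (Fin (d m)) (Fin (d m)) ℂ)) n (A n 0)) *
        famKron (Function.update (fun m => (1 : Matrix (Fin (d m)) (Fin (d m)) ℂ)) 0
          (tildeA (A 0) 0)) := by
    intro n hn
    have hn0 : n ≠ 0 := Finset.ne_of_mem_erase hn
    rw [famKron_mul, famKron_mul]
    refine congrArg famKron (funext fun m => ?_)
    rcases eq_or_ne m 0 with rfl | hm0
    · simp [Function.update_self, Function.update_of_ne (Ne.symm hn0)]
    · rcases eq_or_ne m n with rfl | hmn
      · simp [Function.update_self, Function.update_of_ne hm0]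
      · simp [Function.update_of_ne hm0, Function.update_of_ne hmn]
  have hK0sq : famKron (Function.update (fun m => (1 : Matrix (Fin (d m)) (Fin (d m)) ℂ)) 0
          (tildeA (A 0) 0 * tildeA (A 0) 0)) =
      famKron (Function.update (fun m => (1 : Matrix (Fin (d m)) (Fin (d m)) ℂ)) 0
          (tildeA (A 0) 0)) ^ 2 := by
    rw [pow_two, famKron_update_one_mul]
  have hK1sq : famKron (Function.update (fun m => (1 : Matrix (Fin (d m)) (Fin (d m)) ℂ)) 0
          (tildeA (A 0) 1 * tildeA (A 0) 1)) =
      famKron (Function.update (fun m => (1 : Matrix (Fin (d m)) (Fin (d m)) ℂ)) 0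
          (tildeA (A 0) 1)) ^ 2 := by
    rw [pow_two, famKron_update_one_mul]
  have hTsq : famKron (Function.update (fun n => A n 1) 0
          (1 : Matrix (Fin (d 0)) (Fin (d 0)) ℂ)) ^ 2 =
      famKron (Function.update (fun n => A n 1 * A n 1) 0
          (1 : Matrix (Fin (d 0)) (Fin (d 0)) ℂ)) := by
    rw [pow_two, famKron_mul]
    refine congrArg famKron (funext fun n => ?_)
    rcases eq_or_ne n 0 with rfl | hn
    · simp
    · simp [Function.update_of_ne hn]
  have hRsq : ∀ n : Fin N,
      famKron (Function.update (fun m => (1 : Matrix (Fin (d m)) (Fin (d m)) ℂ)) n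
          (A n 0)) ^ 2 =
      famKron (Function.update (fun m => (1 : Matrix (Fin (d m)) (Fin (d m)) ℂ)) n
          (A n 0 * A n 0)) := fun n => by
    rw [pow_two, famKron_update_one_mul]
  have hslot : ((1 : Matrix (Fin (d 0)) (Fin (d 0)) ℂ) - A 0 0 ^ 2) +
        ((1 : Matrix (Fin (d 0)) (Fin (d 0)) ℂ) - A 0 1 ^ 2) =
      (2 : ℂ) • (1 : Matrix (Fin (d 0)) (Fin (d 0)) ℂ) -
        tildeA (A 0) 0 * tildeA (A 0) 0 - tildeA (A 0) 1 * tildeA (A 0) 1 := by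
    rw [← pow_two, ← pow_two, two_smul, sub_sub, tilde_sq_add]
    abel
  have hupdone : Function.update (fun m => (1 : Matrix (Fin (d m)) (Fin (d m)) ℂ)) 0
      (1 : Matrix (Fin (d 0)) (Fin (d 0)) ℂ) = fun m => (1 : Matrix (Fin (d m)) (Fin (d m)) ℂ) :=
    Function.update_eq_self _ _
  have hBig : famKron (Function.update (fun m => (1 : Matrix (Fin (d m)) (Fin (d m)) ℂ)) 0
          (((1 : Matrix (Fin (d 0)) (Fin (d 0)) ℂ) - A 0 0 ^ 2) +
            ((1 : Matrix (Fin (d 0)) (Fin (d 0)) ℂ) - A 0 1 ^ 2))) =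
      (2 : ℂ) • (1 : Matrix (∀ n, Fin (d n)) (∀ n, Fin (d n)) ℂ) -
        famKron (Function.update (fun m => (1 : Matrix (Fin (d m)) (Fin (d m)) ℂ)) 0
          (tildeA (A 0) 0)) ^ 2 -
        famKron (Function.update (fun m => (1 : Matrix (Fin (d m)) (Fin (d m)) ℂ)) 0
          (tildeA (A 0) 1)) ^ 2 := by
    rw [hslot, famKron_update_sub, famKron_update_sub, famKron_update_smul, hupdone,
      famKron_one, hK0sq, hK1sq]
  have hQ : ∀ n : Fin N, SOSQ A a n =
      ((-1 : ℂ) ^ (a 0 : ℕ) * (-1 : ℂ) ^ (a n : ℕ)) •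
        famKron (Function.update (fun m => (1 : Matrix (Fin (d m)) (Fin (d m)) ℂ)) 0
          (tildeA (A 0) 0)) -
      famKron (Function.update (fun m => (1 : Matrix (Fin (d m)) (Fin (d m)) ℂ)) n (A n 0)) := by
    intro n
    rw [SOSQ, pow_add]
  have hNB : NBell A a = (-1 : ℂ) ^ (a 0 : ℕ) •
      (((N : ℂ) - 1) •
          (famKron (Function.update (fun m => (1 : Matrix (Fin (d m)) (Fin (d m)) ℂ)) 0
              (tildeA (A 0) 1)) *
            famKron (Function.update (fun n => A n 1) 0
              (1 : Matrix (Fin (d 0)) (Fin (d 0)) ℂ))) +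
        ∑ n ∈ Finset.univ.erase 0, (-1 : ℂ) ^ (a n : ℕ) •
          (famKron (Function.update (fun m => (1 : Matrix (Fin (d m)) (Fin (d m)) ℂ)) 0
              (tildeA (A 0) 0)) *
            famKron (Function.update (fun m => (1 : Matrix (Fin (d m)) (Fin (d m)) ℂ)) n
              (A n 0)))) := by
    rw [NBell, ← hK1T, Finset.sum_congr rfl (fun n hn => by rw [hK0R n hn])]
  have hEq := core_identity (Finset.univ.erase (0 : Fin N)) ((N : ℂ) - 1) hν
    ((-1 : ℂ) ^ (a 0 : ℕ)) (neg_one_pow_mul_self _) (fun n => (-1 : ℂ) ^ (a n : ℕ))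
    (fun n _ => by rw [← pow_add]; exact neg_one_pow_mul_self _)
    (famKron (Function.update (fun m => (1 : Matrix (Fin (d m)) (Fin (d m)) ℂ)) 0
      (tildeA (A 0) 0)))
    (famKron (Function.update (fun m => (1 : Matrix (Fin (d m)) (Fin (d m)) ℂ)) 0
      (tildeA (A 0) 1)))
    (famKron (Function.update (fun n => A n 1) 0 (1 : Matrix (Fin (d 0)) (Fin (d 0)) ℂ)))
    (fun n => famKron (Function.update (fun m => (1 : Matrix (Fin (d m)) (Fin (d m)) ℂ)) n
      (A n 0)))
    hcommT hcommR
  have hsum : ∑ n ∈ Finset.univ.erase (0 : Fin N), SOSQ A a n ^ 2 =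
      ∑ n ∈ Finset.univ.erase (0 : Fin N),
        (((-1 : ℂ) ^ (a 0 : ℕ) * (-1 : ℂ) ^ (a n : ℕ)) •
            famKron (Function.update (fun m => (1 : Matrix (Fin (d m)) (Fin (d m)) ℂ)) 0
              (tildeA (A 0) 0)) -
          famKron (Function.update (fun m => (1 : Matrix (Fin (d m)) (Fin (d m)) ℂ)) n
            (A n 0))) ^ 2 :=
    Finset.sum_congr rfl (fun n _ => by rw [hQ n])
  rw [hNB, show SOSP A a = (-1 : ℂ) ^ (a 0 : ℕ) •
      famKron (Function.update (fun m => (1 : Matrix (Fin (d m)) (Fin (d m)) ℂ)) 0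
        (tildeA (A 0) 1)) -
      famKron (Function.update (fun n => A n 1) 0 (1 : Matrix (Fin (d 0)) (Fin (d 0)) ℂ))
      from rfl,
    hsum, hEq]
  refine Matrix.PosSemidef.add (Matrix.PosSemidef.add ?_ ?_) ?_
  · rw [← hBig, hνnat]
    refine psd_smul_nat (famKron_posSemidef fun n => ?_) _
    rcases eq_or_ne n 0 with rfl | hn
    · rw [Function.update_self]
      exact (hAc 0 0).add (hAc 0 1)
    · rw [Function.update_of_ne hn]
      exact Matrix.PosSemidef.one
  · rw [hTsq, hνnat]
    refine psd_smul_nat (famKron_le_one (fun n => ?_) (fun n => ?_)) _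
    · rcases eq_or_ne n 0 with rfl | hn
      · rw [Function.update_self]
        exact Matrix.PosSemidef.one
      · rw [Function.update_of_ne hn, ← pow_two]
        exact psd_sq (hAh n 1)
    · rcases eq_or_ne n 0 with rfl | hn
      · rw [Function.update_self, sub_self]
        exact Matrix.PosSemidef.zero
      · rw [Function.update_of_ne hn, ← pow_two]
        exact hAc n 1
  · refine Finset.sum_induction _ (fun X : Matrix (∀ n, Fin (d n)) (∀ n, Fin (d n)) ℂ => X.PosSemidef)
      (fun x y hx hy => hx.add hy) Matrix.PosSemidef.zero (fun n _ => ?_)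
    rw [hRsq n]
    refine famKron_le_one (fun m => ?_) (fun m => ?_)
    · rcases eq_or_ne m n with rfl | hm
      · rw [Function.update_self, ← pow_two]
        exact psd_sq (hAh m 0)
      · rw [Function.update_of_ne hm]
        exact Matrix.PosSemidef.one
    · rcases eq_or_ne m n with rfl | hm
      · rw [Function.update_self, ← pow_two]
        exact hAc m 0
      · rw [Function.update_of_ne hm, sub_self]
        exact Matrix.PosSemidef.zero

end
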